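/- For odd n ≥ 5, any symmetric matrix A ∈ Sⁿ with support graph equal to the n-cycle Cₙ and rank n−2 is not completely positive semidefinite. -/

import Mathlib

open Matrix

def CompletelyPSD {n : ℕ} (A : Matrix (Fin n) (Fin n) ℝ) : Prop :=
  ∃ (d : ℕ) (X : Fin n → Matrix (Fin d) (Fin d) ℝ),
    1 ≤ d ∧ (∀ i, (X i).PosSemidef) ∧ ∀ i j, A i j = ((X i) * (X j)).trace

open scoped MatrixOrder in
noncomputable def Matrix.PosSemidef.sqrt {d : ℕ} {P : Matrix (Fin d) (Fin d) ℝ}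
    (_hP : P.PosSemidef) : Matrix (Fin d) (Fin d) ℝ := CFC.sqrt P

open scoped MatrixOrder in
lemma Matrix.PosSemidef.posSemidef_sqrt {d : ℕ} {P : Matrix (Fin d) (Fin d) ℝ}
    (hP : P.PosSemidef) : hP.sqrt.PosSemidef := (CFC.sqrt_nonneg P).posSemidef

open scoped MatrixOrder in
lemma Matrix.PosSemidef.sqrt_mul_self {d : ℕ} {P : Matrix (Fin d) (Fin d) ℝ}
    (hP : P.PosSemidef) : hP.sqrt * hP.sqrt = P := CFC.sqrt_mul_sqrt_self P hP.nonneg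

lemma trace_hmul_self_nonneg {d : ℕ} (M : Matrix (Fin d) (Fin d) ℝ) :
    0 ≤ (Mᴴ * M).trace := by
  have : (Mᴴ * M).trace = ∑ j, ∑ i, M i j * M i j := by
    simp [Matrix.trace, Matrix.diag, Matrix.mul_apply, Matrix.conjTranspose_apply]
  rw [this]
  exact Finset.sum_nonneg fun j _ => Finset.sum_nonneg fun i _ => mul_self_nonneg _

lemma trace_hmul_self_eq_zero {d : ℕ} {M : Matrix (Fin d) (Fin d) ℝ}
    (h : (Mᴴ * M).trace = 0) : M = 0 := by
  have key : ∑ j, ∑ i, M i j * M i j = 0 := by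
    rw [← h]; simp [Matrix.trace, Matrix.diag, Matrix.mul_apply, Matrix.conjTranspose_apply]
  ext i j
  have h1 := (Finset.sum_eq_zero_iff_of_nonneg
    (fun j _ => Finset.sum_nonneg fun i _ => mul_self_nonneg (M i j))).1 key j (Finset.mem_univ _)
  have h2 := (Finset.sum_eq_zero_iff_of_nonneg
    (fun i _ => mul_self_nonneg (M i j))).1 h1 i (Finset.mem_univ _)
  simpa using mul_self_eq_zero.mp h2

lemma psd_trace_key {d : ℕ} {P Q : Matrix (Fin d) (Fin d) ℝ}
    (hP : P.PosSemidef) (hQ : Q.PosSemidef) :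
    ((hP.sqrt * hQ.sqrt)ᴴ * (hP.sqrt * hQ.sqrt)).trace = (P * Q).trace := by
  rw [conjTranspose_mul, hP.posSemidef_sqrt.1.eq, hQ.posSemidef_sqrt.1.eq,
    mul_assoc, ← mul_assoc hP.sqrt hP.sqrt, hP.sqrt_mul_self, trace_mul_comm,
    mul_assoc, hQ.sqrt_mul_self]

lemma psd_trace_mul_nonneg {d : ℕ} {P Q : Matrix (Fin d) (Fin d) ℝ}
    (hP : P.PosSemidef) (hQ : Q.PosSemidef) : 0 ≤ (P * Q).trace := by
  rw [← psd_trace_key hP hQ]; exact trace_hmul_self_nonneg _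

lemma psd_mul_eq_zero {d : ℕ} {P Q : Matrix (Fin d) (Fin d) ℝ}
    (hP : P.PosSemidef) (hQ : Q.PosSemidef) (h : (P * Q).trace = 0) : P * Q = 0 := by
  have h0 : hP.sqrt * hQ.sqrt = 0 :=
    trace_hmul_self_eq_zero (by rw [psd_trace_key hP hQ, h])
  calc P * Q = hP.sqrt * (hP.sqrt * hQ.sqrt) * hQ.sqrt := by
        rw [← mul_assoc, mul_assoc _ _ hQ.sqrt, ← mul_assoc, hP.sqrt_mul_self, mul_assoc,
          hQ.sqrt_mul_self]
    _ = 0 := by rw [h0, mul_zero, zero_mul]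

lemma psd_trace_aba_key {d : ℕ} {P Q : Matrix (Fin d) (Fin d) ℝ}
    (hP : P.PosSemidef) (hQ : Q.PosSemidef) :
    ((hQ.sqrt * P)ᴴ * (hQ.sqrt * P)).trace = (P * Q * P).trace := by
  rw [conjTranspose_mul, hQ.posSemidef_sqrt.1.eq, hP.1.eq, mul_assoc,
    ← mul_assoc hQ.sqrt hQ.sqrt, hQ.sqrt_mul_self, ← mul_assoc]

lemma psd_trace_aba_nonneg {d : ℕ} {P Q : Matrix (Fin d) (Fin d) ℝ}
    (hP : P.PosSemidef) (hQ : Q.PosSemidef) : 0 ≤ (P * Q * P).trace := by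
  rw [← psd_trace_aba_key hP hQ]; exact trace_hmul_self_nonneg _

lemma psd_trace_aba_pos {d : ℕ} {P Q : Matrix (Fin d) (Fin d) ℝ}
    (hP : P.PosSemidef) (hQ : Q.PosSemidef) (h : (P * Q).trace ≠ 0) :
    0 < (P * Q * P).trace := by
  rcases (psd_trace_aba_nonneg hP hQ).lt_or_eq with hlt | heq
  · exact hlt
  · exfalso
    have h0 : hQ.sqrt * P = 0 :=
      trace_hmul_self_eq_zero (by rw [psd_trace_aba_key hP hQ, ← heq])
    have hQP : Q * P = 0 := by
      calc Q * P = hQ.sqrt * (hQ.sqrt * P) := by rw [← mul_assoc, hQ.sqrt_mul_self]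
        _ = 0 := by rw [h0, mul_zero]
    exact h (by rw [trace_mul_comm, hQP, trace_zero])

/-- For odd `n ≥ 5`, a symmetric matrix `A` whose support graph equals the `n`-cycle
`Cₙ` and which has rank `n − 2` is not completely positive semidefinite. -/
theorem cycle_rank_not_csplus {n : ℕ} [NeZero n] (hodd : Odd n) (hn : 5 ≤ n)
    (A : Matrix (Fin n) (Fin n) ℝ) (hsym : A.IsSymm)
    (hcyc : ∀ i j : Fin n, i ≠ j → (A i j ≠ 0 ↔ (j = i + 1 ∨ i = j + 1)))
    (hrank : A.rank = n - 2) :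
    ¬ CompletelyPSD A := by
  rintro ⟨d, X, -, hpsd, hA⟩
  open Fin.CommRing in
  -- arithmetic in `Fin n`
  have key : ∀ (j : Fin n) (k : ℕ), 0 < k → k < n → j + (k : Fin n) ≠ j := by
    intro j k hk0 hkn h
    have h0 : ((k : ℕ) : Fin n) = 0 := by
      have := add_eq_left.mp h
      exact this
    rcases Fin.natCast_eq_zero.mp h0 with ⟨c, hc⟩
    rcases Nat.eq_zero_or_pos c with rfl | hc0
    · omega
    · nlinarith [Nat.le_mul_of_pos_right n hc0]
  -- products of nonadjacent vanish
  have hzero : ∀ i j : Fin n, i ≠ j → i ≠ j + 1 → j ≠ i + 1 → X i * X j = 0 := by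
    intro i j hij h1 h2
    apply psd_mul_eq_zero (hpsd i) (hpsd j)
    rw [← hA]
    by_contra h
    rcases (hcyc i j hij).mp h with h' | h'
    · exact h2 h'
    · exact h1 h'
  have hadj : ∀ j : Fin n, (X j * X (j + 1)).trace ≠ 0 := by
    intro j
    rw [← hA]
    refine (hcyc j (j + 1) ?_).mpr (Or.inl rfl)
    intro h
    exact key j 1 one_pos (by omega) (by push_cast; linear_combination -h)
  -- kernel vector
  have hdet : A.det = 0 := by
    by_contra hdet
    have hu : IsUnit A := (Matrix.isUnit_iff_isUnit_det A).2 (isUnit_iff_ne_zero.2 hdet)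
    have hr := Matrix.rank_of_isUnit A hu
    rw [hrank, Fintype.card_fin] at hr
    omega
  obtain ⟨v, hv, hAv⟩ := (Matrix.exists_mulVec_eq_zero_iff).mpr hdet
  -- the combination vanishes
  have hSS : ((∑ i, v i • X i)ᴴ * (∑ i, v i • X i)).trace = 0 := by
    have hH : (∑ i, v i • X i)ᴴ = ∑ i, v i • X i := by
      rw [conjTranspose_sum]
      exact Finset.sum_congr rfl fun i _ => by
        rw [conjTranspose_smul, (hpsd i).1.eq]; simp
    rw [hH, Finset.sum_mul, trace_sum]
    have hterm : ∀ i ∈ Finset.univ,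
        ((v i • X i) * ∑ j, v j • X j).trace = v i * A.mulVec v i := by
      intro i _
      rw [smul_mul_assoc, Finset.mul_sum, trace_smul, trace_sum, smul_eq_mul,
        Matrix.mulVec, dotProduct]
      congr 1
      refine Finset.sum_congr rfl fun j _ => ?_
      rw [mul_smul_comm, trace_smul, smul_eq_mul, hA, mul_comm]
    rw [Finset.sum_congr rfl hterm]
    simp [hAv]
  have hS0 : (∑ i, v i • X i) = 0 := trace_hmul_self_eq_zero hSS
  -- the three-term relations
  have hsum : ∀ j : Fin n, ∑ i, v i * (X i * X j * X (j + 1)).trace = 0 := by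
    intro j
    have h0 : ((∑ i, v i • X i) * (X j * X (j + 1))).trace = 0 := by
      rw [hS0, zero_mul, trace_zero]
    rw [Finset.sum_mul] at h0
    simp only [smul_mul_assoc, trace_sum, trace_smul, smul_eq_mul, ← mul_assoc] at h0
    exact h0
  have hvanish : ∀ j i : Fin n, i ≠ j → i ≠ j + 1 → (X i * X j * X (j + 1)).trace = 0 := by
    intro j i hij hij1
    by_cases hji : j = i + 1
    · -- use X (j+1) * X i = 0
      have hz : X (j + 1) * X i = 0 := by
        refine hzero (j + 1) i ?_ ?_ ?_
        · intro h
          exact key j 2 (by norm_num : (0:ℕ) < 2) (by omega) (by push_cast; linear_combination h - hji)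
        · intro h
          exact key i 1 one_pos (by omega) (by push_cast; linear_combination h - hji)
        · intro h
          exact key j 3 (by norm_num : (0:ℕ) < 3) (by omega) (by push_cast; linear_combination -h - hji)
      rw [Matrix.trace_mul_cycle, hz, zero_mul, trace_zero]
    · have hz : X i * X j = 0 := hzero i j hij hij1 hji
      rw [hz, zero_mul, trace_zero]
  have hstep : ∀ j : Fin n,
      (X j * X (j + 1) * X j).trace * v j
        + (X (j + 1) * X j * X (j + 1)).trace * v (j + 1) = 0 := by
    intro j
    have hnj : j ≠ j + 1 := by
      intro h
      exact key j 1 one_pos (by omega) (by push_cast; linear_combination -h)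
    have hsub : ∑ i ∈ ({j, j + 1} : Finset (Fin n)), v i * (X i * X j * X (j + 1)).trace
        = ∑ i, v i * (X i * X j * X (j + 1)).trace := by
      refine Finset.sum_subset (Finset.subset_univ _) fun i _ hi => ?_
      simp only [Finset.mem_insert, Finset.mem_singleton, not_or] at hi
      rw [hvanish j i hi.1 hi.2, mul_zero]
    rw [Finset.sum_pair hnj, hsum j] at hsub
    have c1 : (X j * X j * X (j + 1)).trace = (X j * X (j + 1) * X j).trace := by
      rw [Matrix.trace_mul_cycle, Matrix.trace_mul_cycle]
    linear_combination hsub - v j * c1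
  have hs : ∀ j : Fin n, 0 < (X j * X (j + 1) * X j).trace := fun j =>
    psd_trace_aba_pos (hpsd j) (hpsd (j + 1)) (hadj j)
  have ht : ∀ j : Fin n, 0 < (X (j + 1) * X j * X (j + 1)).trace := fun j =>
    psd_trace_aba_pos (hpsd (j + 1)) (hpsd j) (by rw [trace_mul_comm]; exact hadj j)
  have hsign : ∀ j : Fin n, v j ≠ 0 → v j * v (j + 1) < 0 := by
    intro j hvj
    have h2 : (X j * X (j + 1) * X j).trace * (v j * v j)
        + (X (j + 1) * X j * X (j + 1)).trace * (v j * v (j + 1)) = 0 := by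
      linear_combination v j * hstep j
    nlinarith [mul_pos (hs j) (mul_self_pos.mpr hvj), ht j]
  have hprop : ∀ j : Fin n, v j ≠ 0 → v (j + 1) ≠ 0 := by
    intro j hvj hv1
    have := hsign j hvj
    rw [hv1, mul_zero] at this
    exact lt_irrefl 0 this
  have hall : ∀ i : Fin n, v i ≠ 0 := by
    obtain ⟨j0, hj0⟩ := Function.ne_iff.mp hv
    have hrec : ∀ k : ℕ, v (j0 + (k : Fin n)) ≠ 0 := by
      intro k
      induction k with
      | zero => simpa using hj0
      | succ m ih =>
        have e : ((m + 1 : ℕ) : Fin n) = (m : Fin n) + 1 := by push_cast; ring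
        rw [e, ← add_assoc]
        exact hprop _ ih
    intro i
    have := hrec ((i - j0).val)
    rwa [Fin.cast_val_eq_self, add_comm, sub_add_cancel] at this
  have hprodpos : 0 < ∏ j : Fin n, v j * v (j + 1) := by
    have e1 : ∏ j : Fin n, v j * v (j + 1)
        = (∏ j : Fin n, v j) * ∏ j : Fin n, v (j + 1) := Finset.prod_mul_distrib
    have e2 : ∏ j : Fin n, v (j + 1) = ∏ j : Fin n, v j :=
      Fintype.prod_equiv (Equiv.addRight (1 : Fin n)) _ _ fun j => rfl
    rw [e1, e2]
    exact mul_self_pos.mpr (Finset.prod_ne_zero_iff.mpr fun i _ => hall i)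
  have hprodneg : ∏ j : Fin n, v j * v (j + 1) < 0 := by
    have hneg : 0 < ∏ j : Fin n, -(v j * v (j + 1)) :=
      Finset.prod_pos fun j _ => neg_pos.mpr (hsign j (hall j))
    have he : ∏ j : Fin n, -(v j * v (j + 1))
        = (-1 : ℝ) ^ n * ∏ j : Fin n, (v j * v (j + 1)) := by
      calc ∏ j : Fin n, -(v j * v (j + 1))
          = ∏ j : Fin n, (-1 : ℝ) * (v j * v (j + 1)) := by simp [neg_one_mul]
        _ = (∏ _j : Fin n, (-1 : ℝ)) * ∏ j : Fin n, (v j * v (j + 1)) :=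
            Finset.prod_mul_distrib
        _ = (-1 : ℝ) ^ n * ∏ j : Fin n, (v j * v (j + 1)) := by
            rw [Finset.prod_const, Finset.card_univ, Fintype.card_fin]
    rw [he, hodd.neg_one_pow] at hneg
    linarith
  linarith
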